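/- Let f ∈ R[x] be a monic basic irreducible polynomial and let g ∈ R[x] be such that f and g are coprime in R[x] (i.e., ⟨f⟩ + ⟨g⟩ = R[x]). Set K = R[x]/⟨f^{p^s} + γg⟩. Then: (a) the image in K of any polynomial of R[x] that is coprime to f is a unit of K; (b) the image of f in K is nilpotent, and the ideals of K generated by f^{p^s} and by γ coincide; (c) the nilpotency index of the image of f in K (the least positive integer N with f^N = 0 in K) equals 2p^s. -/

import Mathlib

open Polynomial

/-- units, nilpotency and the ideal identity `⟨f^{p^s}⟩ = ⟨γ⟩` in
`K = R[x]/⟨f^{p^s} + γ g⟩`, for a finite commutative chain ring `R` with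
nilpotency index 2, `f` monic basic irreducible and `g` coprime to `f`. -/
theorem stmt1 {R : Type} [CommRing R] [Finite R]
    (p m s n : ℕ) (hp : p.Prime) (hm : 0 < m) (hs : 0 < s) (hn : 0 < n)
    (hnp : Nat.gcd n p = 1)
    (γ : R) (hγ : γ ≠ 0) (hγ2 : γ ^ 2 = 0)
    (hmax : ∀ a : R, a ∈ Ideal.span {γ} ↔ ¬ IsUnit a)
    (hres : Nat.card (R ⧸ Ideal.span {γ}) = p ^ m)
    (f g : R[X]) (hf : f.Monic)
    (hfi : Irreducible (f.map (Ideal.Quotient.mk (Ideal.span {γ}))))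
    (hfg : IsCoprime f g) :
    (∀ a : R[X], IsCoprime f a →
        IsUnit (Ideal.Quotient.mk (Ideal.span {f ^ p ^ s + C γ * g}) a)) ∧
    IsNilpotent (Ideal.Quotient.mk (Ideal.span {f ^ p ^ s + C γ * g}) f) ∧
    Ideal.span {Ideal.Quotient.mk (Ideal.span {f ^ p ^ s + C γ * g}) (f ^ p ^ s)} =
      Ideal.span {Ideal.Quotient.mk (Ideal.span {f ^ p ^ s + C γ * g}) (C γ)} ∧
    IsLeast {N : ℕ | 0 < N ∧
      (Ideal.Quotient.mk (Ideal.span {f ^ p ^ s + C γ * g}) f) ^ N = 0} (2 * p ^ s) := by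
  classical
  set M : Ideal R := Ideal.span {γ} with hM
  -- the maximal ideal
  have hMmax : M.IsMaximal := by
    rw [Ideal.isMaximal_iff]
    refine ⟨fun h1 => ((hmax 1).mp h1) isUnit_one, fun J x hIJ hx hxJ => ?_⟩
    have hux : IsUnit x := by
      by_contra hc; exact hx ((hmax x).mpr hc)
    obtain ⟨u, rfl⟩ := hux
    simpa using J.mul_mem_right (↑u⁻¹) hxJ
  haveI : M.IsPrime := hMmax.isPrime
  set q : R →+* R ⧸ M := Ideal.Quotient.mk M with hq
  have hqγ : q γ = 0 := Ideal.Quotient.eq_zero_iff_mem.mpr (Ideal.subset_span rfl)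
  set e : ℕ := p ^ s with hee
  have he1 : 1 ≤ e := Nat.one_le_pow _ _ hp.pos
  set F : R[X] := f ^ e + C γ * g with hF
  set I : Ideal R[X] := Ideal.span {F} with hI
  set φ : R[X] →+* R[X] ⧸ I := Ideal.Quotient.mk I with hφ
  have hγγ : γ * γ = 0 := by rw [← sq]; exact hγ2
  have hCγ2 : (C γ : R[X]) * C γ = 0 := by rw [← C_mul, hγγ, C_0]
  have hf2e : f ^ (2 * e) = F * (f ^ e - C γ * g) := by
    rw [two_mul, pow_add, hF]
    linear_combination g * g * hCγ2
  have hmemI : f ^ (2 * e) ∈ I := by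
    rw [hf2e]
    exact Ideal.mem_span_singleton.mpr (Dvd.intro _ rfl)
  have hφf2e : (φ f) ^ (2 * e) = 0 := by
    rw [← map_pow, hφ, Ideal.Quotient.eq_zero_iff_mem]; exact hmemI
  have hnil : IsNilpotent (φ f) := ⟨2 * e, hφf2e⟩
  -- part (a)
  have ha : ∀ a : R[X], IsCoprime f a → IsUnit (φ a) := by
    intro a hc
    obtain ⟨u, v, huv⟩ := hc
    have h1 : φ u * φ f + φ v * φ a = 1 := by
      rw [← map_mul, ← map_mul, ← map_add, huv, map_one]
    have hn2 : IsNilpotent (φ u * φ f) :=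
      (Commute.all _ _).isNilpotent_mul_left hnil
    have hu1 : IsUnit (φ v * φ a) := by
      have hcalc : φ v * φ a = 1 - φ u * φ f := by linear_combination h1
      rw [hcalc]
      exact hn2.isUnit_one_sub
    exact isUnit_of_mul_isUnit_right hu1
  -- the basic relation in the quotient
  have hFz : φ (f ^ e) + φ (C γ) * φ g = 0 := by
    rw [← map_mul, ← map_add, hφ, Ideal.Quotient.eq_zero_iff_mem]
    exact Ideal.subset_span rfl
  -- part (b): span equality
  have hb : Ideal.span {φ (f ^ e)} = Ideal.span {φ (C γ)} := by
    obtain ⟨ug, hug⟩ := ha g hfg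
    have hg1 : φ g * ↑ug⁻¹ = 1 := by rw [← hug]; exact ug.mul_inv
    apply le_antisymm <;> rw [Ideal.span_singleton_le_span_singleton]
    · exact ⟨-φ g, by linear_combination hFz⟩
    · exact ⟨-↑ug⁻¹, by linear_combination (↑ug⁻¹ : R[X] ⧸ I) * hFz - φ (C γ) * hg1⟩
  -- key non-membership: f^(2e-1) ∉ I
  have hnot : f ^ (2 * e - 1) ∉ I := by
    intro hmem
    obtain ⟨h, heq⟩ := Ideal.mem_span_singleton.mp hmem
    -- heq : f ^ (2e-1) = F * h
    have h2 : 2 * e - 1 = e + (e - 1) := by omega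
    rw [h2, pow_add] at heq
    have heq2 : f ^ e * (f ^ (e - 1) - h) = C γ * (g * h) := by
      rw [hF] at heq; linear_combination heq
    -- reduce mod γ
    have hfbar_ne : f.map q ≠ 0 := (hf.map q).ne_zero
    have hmap1 : (f.map q) ^ e * ((f ^ (e - 1) - h).map q) = 0 := by
      have := congrArg (Polynomial.map q) heq2
      simpa [Polynomial.map_mul, Polynomial.map_pow, hqγ] using this
    have hdbar : (f ^ (e - 1) - h).map q = 0 := by
      rcases mul_eq_zero.mp hmap1 with h' | h'
      · exact absurd h' (pow_ne_zero _ hfbar_ne)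
      · exact h'
    -- so C γ divides f^(e-1) - h
    have hdvd : C γ ∣ (f ^ (e - 1) - h) := by
      rw [Polynomial.C_dvd_iff_dvd_coeff]
      intro i
      rw [← Ideal.mem_span_singleton, ← hM, ← Ideal.Quotient.eq_zero_iff_mem]
      simpa only [Polynomial.coeff_map, Polynomial.coeff_zero] using
        congrArg (fun P => P.coeff i) hdbar
    obtain ⟨t, ht⟩ := hdvd
    rw [ht] at heq2
    have hz : C γ * (f ^ e * t - g * h) = 0 := by linear_combination heq2
    have hz2 : (f ^ e * t - g * h).map q = 0 := by
      ext i
      have hci : γ * (f ^ e * t - g * h).coeff i = 0 := by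
        have := congrArg (fun P => Polynomial.coeff P i) hz
        simpa [Polynomial.coeff_C_mul] using this
      have : (f ^ e * t - g * h).coeff i ∈ M := by
        by_contra hc
        have hu : IsUnit ((f ^ e * t - g * h).coeff i) := by
          by_contra hcu; exact hc ((hmax _).mpr hcu)
        obtain ⟨w, hw⟩ := hu
        apply hγ
        have := congrArg (fun x => x * (↑w⁻¹ : R)) hci
        simpa [← hw, mul_assoc] using this
      simp only [Polynomial.coeff_map, Polynomial.coeff_zero]
      exact Ideal.Quotient.eq_zero_iff_mem.mpr this
    -- pass to the residue field
    rw [Polynomial.map_sub] at hz2 hdbar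
    have hmain : (f.map q) ^ e * (t.map q) = (g.map q) * (h.map q) := by
      have := sub_eq_zero.mp hz2
      simpa [Polynomial.map_mul, Polynomial.map_pow] using this
    have hhbar : (h.map q) = (f.map q) ^ (e - 1) := by
      have := (sub_eq_zero.mp hdbar).symm
      simpa [Polynomial.map_pow] using this
    rw [hhbar] at hmain
    have hee' : e - 1 + 1 = e := by omega
    have hcancel : f.map q * t.map q = g.map q := by
      apply mul_left_cancel₀ (pow_ne_zero (e - 1) hfbar_ne)
      rw [← mul_assoc, ← pow_succ, hee']
      linear_combination hmain
    have hdvdg : f.map q ∣ g.map q := ⟨t.map q, hcancel.symm⟩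
    have hcop : IsCoprime (f.map q) (g.map q) := by
      have := hfg.map (Polynomial.mapRingHom q)
      simpa using this
    exact hfi.not_isUnit (hcop.isUnit_of_dvd' dvd_rfl hdvdg)
  -- part (c)
  have hc : IsLeast {N : ℕ | 0 < N ∧ (φ f) ^ N = 0} (2 * e) := by
    constructor
    · exact ⟨by positivity, hφf2e⟩
    · rintro N ⟨hN0, hNz⟩
      by_contra hlt
      push_neg at hlt
      have h21 : 2 * e - 1 = N + (2 * e - 1 - N) := by omega
      have : (φ f) ^ (2 * e - 1) = 0 := by
        rw [h21, pow_add, hNz, zero_mul]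
      apply hnot
      rw [← Ideal.Quotient.eq_zero_iff_mem, ← hφ, map_pow]
      exact this
  exact ⟨ha, hnil, hb, hc⟩
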